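/- Let k, n ≥ 1 and let (A_p)_{p∈V} be a finite family, indexed by a finite set V, of n-element multisets of nonzero linear forms in R = 𝔽₂[t₁,…,t_k]. Then the following are equivalent: (i) for every symmetric polynomial f over 𝔽₂ in n variables, Σ_{p∈V} f(A_p)/σ_n(A_p) lies in the image of R in its field of fractions K; (ii) for every nonzero linear form ρ ∈ R and every symmetric polynomial f over 𝔽₂ in n variables, there exist h, g ∈ R with ρ ∤ g such that Σ_{p∈V : ρ ∈ A_p} f(A_p)/σ_n(A_p) = h/g in K, where the sum is over those indices p for which ρ occurs in A_p. -/

import Mathlib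

open MvPolynomial

noncomputable section

/-- The polynomial ring `R = 𝔽₂[t₁,…,t_k]`. -/
abbrev Rk (k : ℕ) : Type := MvPolynomial (Fin k) (ZMod 2)

/-- The field of fractions `K` of `R`. -/
abbrev Kk (k : ℕ) : Type := FractionRing (Rk k)

/-- The canonical map `R → K`. -/
def toK (k : ℕ) : Rk k →+* Kk k := algebraMap _ _

open scoped Classical

namespace Stmt5Aux

variable {k : ℕ}

lemma zmod2_eq_one : ∀ a : ZMod 2, a ≠ 0 → a = 1 := by decide

lemma single_of_degree_one {d : Fin k →₀ ℕ} (hd : Finsupp.degree d = 1)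
    {j : Fin k} (hj : d j ≠ 0) : d = Finsupp.single j 1 := by
  have h1 : d j ≤ 1 := hd ▸ Finsupp.le_degree j d
  ext i
  rcases eq_or_ne i j with rfl | hij
  · simp only [Finsupp.single_eq_same]; omega
  · rw [Finsupp.single_eq_of_ne' (Ne.symm hij)]
    by_contra hdi
    have hsub : ({i, j} : Finset (Fin k)) ⊆ d.support := by
      intro x hx
      rcases Finset.mem_insert.mp hx with rfl | hx
      · exact Finsupp.mem_support_iff.mpr hdi
      · rw [Finset.mem_singleton] at hx; subst hx
        exact Finsupp.mem_support_iff.mpr hj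
    have hle : d i + d j ≤ Finsupp.degree d := by
      rw [← Finset.sum_pair hij]
      exact Finset.sum_le_sum_of_subset hsub
    omega

lemma coeff_degree_one {ν : Rk k} (hν : ν.IsHomogeneous 1)
    {d : Fin k →₀ ℕ} (hd : coeff d ν ≠ 0) : Finsupp.degree d = 1 := by
  have := hν hd
  rwa [Finsupp.degree_eq_weight_one]

lemma aeval_fix {ν : Rk k} (hν : ν.IsHomogeneous 1) (j : Fin k)
    (u : Fin k → Rk k) (hu : ∀ i, i ≠ j → u i = X i) :
    aeval u (ν - C (coeff (Finsupp.single j 1) ν) * X j)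
      = ν - C (coeff (Finsupp.single j 1) ν) * X j := by
  set c := coeff (Finsupp.single j 1) ν with hc
  set q := ν - C c * X j with hqdef
  have hq : q.IsHomogeneous 1 := hν.sub ((isHomogeneous_X _ _).C_mul _)
  have hjq : coeff (Finsupp.single j 1) q = 0 := by
    rw [hqdef, coeff_sub, coeff_C_mul, coeff_X, if_pos rfl, mul_one, hc, sub_self]
  have h1 : aeval u q = eval₂ C u q := by rw [aeval_def, algebraMap_eq]
  rw [h1]
  conv_rhs => rw [← eval₂_eta q]
  apply eval₂_congr
  intro i d hid hdq
  apply hu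
  rintro rfl
  have hdeg : Finsupp.degree d = 1 := coeff_degree_one hq hdq
  have hds : d = Finsupp.single i 1 :=
    single_of_degree_one hdeg (Finsupp.mem_support_iff.mp hid)
  exact hdq (hds ▸ hjq)

/-- The substitution killing the variable `j`. -/
def psi (j : Fin k) : Rk k →ₐ[ZMod 2] Rk k :=
  aeval (fun i => if i = j then (0 : Rk k) else X i)

lemma psi_X_self (j : Fin k) : psi j (X j) = 0 := by simp [psi]

lemma X_dvd_sub (j : Fin k) (f : Rk k) :
    (X j : Rk k) ∣ f - psi j f := by
  induction f using MvPolynomial.induction_on with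
  | C a => simp [psi, algebraMap_eq]
  | add p q hp hq => rw [map_add]; convert dvd_add hp hq using 1; ring
  | mul_X p i hp =>
    rw [map_mul, show psi j (X i) = if i = j then (0 : Rk k) else X i from aeval_X _ i]
    by_cases hij : i = j
    · subst hij
      rw [if_pos rfl, mul_zero, sub_zero]
      exact dvd_mul_left _ _
    · rw [if_neg hij]
      have h2 : p * X i - psi j p * X i = (p - psi j p) * X i := by ring
      rw [h2]
      exact hp.mul_right _

lemma prime_X (j : Fin k) : Prime (X j : Rk k) := by
  have hψX : psi j (X j) = 0 := psi_X_self j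
  refine ⟨X_ne_zero j, ?_, ?_⟩
  · intro hu
    obtain ⟨w, hw⟩ := hu.exists_right_inv
    have h := congrArg (psi j) hw
    rw [map_mul, hψX, zero_mul, map_one] at h
    exact zero_ne_one h
  · intro a b hab
    obtain ⟨s, hs⟩ := hab
    have h0 : psi j a * psi j b = 0 := by
      rw [← map_mul, hs, map_mul, hψX, zero_mul]
    rcases mul_eq_zero.mp h0 with h | h
    · left; have := X_dvd_sub j a; rwa [h, sub_zero] at this
    · right; have := X_dvd_sub j b; rwa [h, sub_zero] at this

lemma linear_main {ρ : Rk k} (hρ0 : ρ ≠ 0) (hρ1 : ρ.IsHomogeneous 1) :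
    Prime ρ ∧ ∀ μ : Rk k, μ ≠ 0 → μ.IsHomogeneous 1 → ρ ∣ μ → μ = ρ := by
  obtain ⟨d, hd⟩ := exists_coeff_ne_zero hρ0
  have hdeg : Finsupp.degree d = 1 := coeff_degree_one hρ1 hd
  obtain ⟨j, hj⟩ : ∃ j, d j ≠ 0 := by
    by_contra hcon
    push_neg at hcon
    have : d = 0 := Finsupp.ext hcon
    rw [this, map_zero] at hdeg
    exact one_ne_zero hdeg.symm
  have hdj : d = Finsupp.single j 1 := single_of_degree_one hdeg hj
  have hcj : coeff (Finsupp.single j 1) ρ = 1 := zmod2_eq_one _ (hdj ▸ hd)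
  set u : Fin k → Rk k := fun i => if i = j then ρ else X i with hu
  have huj : u j = ρ := if_pos rfl
  have hufix : ∀ i, i ≠ j → u i = X i := fun i hij => if_neg hij
  have hui : ∀ i, (u i).IsHomogeneous 1 := by
    intro i
    rcases eq_or_ne i j with rfl | hij
    · rw [huj]; exact hρ1
    · rw [hufix i hij]; exact isHomogeneous_X _ _
  have h2 : ∀ x : Rk k, x + x = 0 := fun x => by
    rw [← two_smul (ZMod 2) x, show (2 : ZMod 2) = 0 by decide, zero_smul]
  have hq : aeval u (ρ - X j) = ρ - X j := by
    have h := aeval_fix hρ1 j u hufix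
    rwa [hcj, map_one, one_mul] at h
  have haρ : aeval u ρ = X j := by
    have hsplit : ρ = (ρ - X j) + X j := by ring
    calc aeval u ρ = aeval u ((ρ - X j) + X j) := by rw [← hsplit]
      _ = (ρ - X j) + ρ := by rw [map_add, hq, aeval_X, huj]
      _ = X j := by linear_combination h2 ρ - h2 (X j)
  have hcomp : (aeval u).comp (aeval u) = AlgHom.id (ZMod 2) (Rk k) := by
    apply algHom_ext
    intro i
    rcases eq_or_ne i j with rfl | hij
    · show aeval u (aeval u (X i)) = X i
      rw [aeval_X, huj, haρ]
    · show aeval u (aeval u (X i)) = X i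
      rw [aeval_X, hufix i hij, aeval_X, hufix i hij]
  have hee : ∀ x : Rk k, aeval u (aeval u x) = x := by
    intro x
    have := congrArg (fun φ : Rk k →ₐ[ZMod 2] Rk k => φ x) hcomp
    simpa using this
  constructor
  · -- primality
    have hpX : Prime (X j : Rk k) := prime_X j
    set e : Rk k ≃ₐ[ZMod 2] Rk k := AlgEquiv.ofAlgHom (aeval u) (aeval u) hcomp hcomp with he
    have hmul : Prime (e.toRingEquiv.toMulEquiv ρ) := by
      show Prime (aeval u ρ)
      rw [haρ]; exact hpX
    exact (MulEquiv.prime_iff e.toRingEquiv.toMulEquiv).mp hmul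
  · intro μ hμ0 hμ1 hdvd
    set ν := aeval u μ with hν
    have hν1 : ν.IsHomogeneous 1 := by
      have := hμ1.aeval u hui
      rw [hν, aeval_eq_bind₁]; exact this
    have hν0 : ν ≠ 0 := by
      intro h
      apply hμ0
      have := hee μ
      rw [← hν, h, map_zero] at this
      exact this.symm
    have hψν : psi j ν = 0 := by
      obtain ⟨s, hs⟩ := hdvd
      have : ν = X j * aeval u s := by rw [hν, hs, map_mul, haρ]
      rw [this, map_mul, psi_X_self, zero_mul]
    set c' := coeff (Finsupp.single j 1) ν with hc'
    have hfix2 : psi j (ν - C c' * X j) = ν - C c' * X j :=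
      aeval_fix hν1 j _ (fun i hij => if_neg hij)
    have hsplit2 : ν = C c' * X j := by
      have hν2 : ν = (ν - C c' * X j) + C c' * X j := by ring
      have hpc : psi j (C c' * X j) = 0 := by
        rw [map_mul, psi_X_self, mul_zero]
      have h0 : (0 : Rk k) = ν - C c' * X j := by
        rw [← hψν]
        conv_lhs => rw [hν2]
        rw [map_add, hfix2, hpc, add_zero]
      exact sub_eq_zero.mp h0.symm
    have hc1 : c' = 1 := by
      apply zmod2_eq_one
      intro h
      apply hν0
      rw [hsplit2, h, map_zero, zero_mul]
    have hνX : ν = X j := by rw [hsplit2, hc1, map_one, one_mul]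
    have hμν : μ = aeval u ν := by rw [hν, hee]
    rw [hμν, hνX, aeval_X, huj]
lemma toK_inj : Function.Injective (toK k) :=
  IsFractionRing.injective (Rk k) (Kk k)

lemma toK_ne_zero {x : Rk k} (hx : x ≠ 0) : toK k x ≠ 0 := by
  intro h
  exact hx ((map_eq_zero_iff (toK k) toK_inj).mp h)

lemma sum_frac {V : Type} [Fintype V] (s : Finset V) (a b : V → Rk k)
    (hb : ∀ p, b p ≠ 0) :
    ∃ N : Rk k, ∑ p ∈ s, toK k (a p) / toK k (b p)
      = toK k N / toK k (∏ p ∈ s, b p) := by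
  classical
  refine Finset.induction_on s ⟨0, by simp⟩ ?_
  rintro p t hpt ⟨N, hN⟩
  refine ⟨a p * ∏ q ∈ t, b q + b p * N, ?_⟩
  have hbp : toK k (b p) ≠ 0 := toK_ne_zero (hb p)
  have hbt : toK k (∏ q ∈ t, b q) ≠ 0 :=
    toK_ne_zero (Finset.prod_ne_zero_iff.mpr fun q _ => hb q)
  rw [Finset.sum_insert hpt, hN, div_add_div _ _ hbp hbt, Finset.prod_insert hpt,
    map_mul, map_add, map_mul, map_mul]

lemma key (x : Kk k)
    (hx : ∀ ρ : Rk k, ρ ≠ 0 → ρ.IsHomogeneous 1 →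
      ∃ h g : Rk k, ¬ ρ ∣ g ∧ x = toK k h / toK k g) :
    ∀ M : Multiset (Rk k), (∀ ρ ∈ M, ρ ≠ 0 ∧ ρ.IsHomogeneous 1) →
      ∀ N : Rk k, x = toK k N / toK k M.prod → ∃ r, x = toK k r := by
  intro M
  induction M using Multiset.induction_on with
  | empty => intro _ N hN; exact ⟨N, by simpa using hN⟩
  | cons ρ M ih =>
    intro hM N hN
    have hρ0 : ρ ≠ 0 := (hM ρ (Multiset.mem_cons_self ρ M)).1
    have hρ1 := (hM ρ (Multiset.mem_cons_self ρ M)).2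
    have hMprod : M.prod ≠ 0 := by
      intro h
      rw [Multiset.prod_eq_zero_iff] at h
      exact (hM 0 (Multiset.mem_cons_of_mem h)).1 rfl
    obtain ⟨h, g, hg, hxg⟩ := hx ρ hρ0 hρ1
    have hprime := (linear_main hρ0 hρ1).1
    have hg0 : g ≠ 0 := fun h0 => hg (h0 ▸ dvd_zero ρ)
    have hcross : N * g = h * (ρ * M.prod) := by
      have h1 : toK k N / toK k ((ρ ::ₘ M).prod) = toK k h / toK k g := by
        rw [← hN, hxg]
      rw [Multiset.prod_cons] at h1
      have hd1 : toK k (ρ * M.prod) ≠ 0 := toK_ne_zero (mul_ne_zero hρ0 hMprod)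
      have hd2 : toK k g ≠ 0 := toK_ne_zero hg0
      have h3 := (div_eq_div_iff hd1 hd2).mp h1
      apply toK_inj
      rw [map_mul, map_mul]
      exact h3
    have hρN : ρ ∣ N := by
      have hdd : ρ ∣ N * g := ⟨h * M.prod, by linear_combination hcross⟩
      rcases hprime.2.2 _ _ hdd with h' | h'
      · exact h'
      · exact absurd h' hg
    obtain ⟨N', rfl⟩ := hρN
    have hNg : N' * g = h * M.prod := by
      apply mul_left_cancel₀ hρ0
      linear_combination hcross
    apply ih (fun ρ' hρ' => hM ρ' (Multiset.mem_cons_of_mem hρ')) N'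
    rw [hxg, div_eq_div_iff (toK_ne_zero hg0) (toK_ne_zero hMprod),
      ← map_mul, ← map_mul]
    exact congrArg (toK k) (by linear_combination -hNg)

end Stmt5Aux

/-- for a finite family `(A_p)_{p ∈ V}` of `n`-element multisets of
nonzero linear forms, the integrality condition (i) holds iff for every nonzero
linear form `ρ` and every symmetric `f`, the sum over those `p` with `ρ ∈ A_p` of
`f(A_p)/σₙ(A_p)` can be written as `h/g` with `ρ ∤ g` (ii). -/
theorem stmt_5 (k n : ℕ) (hk : 1 ≤ k) (hn : 1 ≤ n)
    (V : Type) [Fintype V]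
    (A : V → Fin n → Rk k)
    (hA : ∀ p i, A p i ≠ 0 ∧ (A p i).IsHomogeneous 1) :
    (∀ f : MvPolynomial (Fin n) (ZMod 2), f.IsSymmetric →
      ∃ r : Rk k,
        ∑ p : V, toK k (aeval (A p) f) / toK k (∏ i, A p i) = toK k r)
    ↔
    (∀ ρ : Rk k, ρ ≠ 0 → ρ.IsHomogeneous 1 →
      ∀ f : MvPolynomial (Fin n) (ZMod 2), f.IsSymmetric →
        ∃ h g : Rk k, ¬ ρ ∣ g ∧
          ∑ p ∈ Finset.univ.filter (fun p => ∃ i, A p i = ρ),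
            toK k (aeval (A p) f) / toK k (∏ i, A p i) = toK k h / toK k g) := by
  have hb : ∀ p, (∏ i, A p i) ≠ 0 :=
    fun p => Finset.prod_ne_zero_iff.mpr fun i _ => (hA p i).1
  have hcompl : ∀ ρ : Rk k, ρ ≠ 0 → ρ.IsHomogeneous 1 →
      ∀ f : MvPolynomial (Fin n) (ZMod 2),
      ∃ N G : Rk k, ¬ ρ ∣ G ∧
        ∑ p ∈ Finset.univ.filter (fun p => ¬ ∃ i, A p i = ρ),
          toK k (aeval (A p) f) / toK k (∏ i, A p i)
          = toK k N / toK k G := by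
    intro ρ hρ0 hρ1 f
    obtain ⟨N, hN⟩ := Stmt5Aux.sum_frac
      (Finset.univ.filter (fun p => ¬ ∃ i, A p i = ρ))
      (fun p => aeval (A p) f) (fun p => ∏ i, A p i) hb
    refine ⟨N, _, ?_, hN⟩
    intro hdvd
    obtain ⟨p, hp, hdp⟩ :=
      ((Stmt5Aux.linear_main hρ0 hρ1).1.dvd_finset_prod_iff _).mp hdvd
    obtain ⟨i, _, hdi⟩ :=
      ((Stmt5Aux.linear_main hρ0 hρ1).1.dvd_finset_prod_iff _).mp hdp
    have heq : A p i = ρ :=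
      (Stmt5Aux.linear_main hρ0 hρ1).2 _ (hA p i).1 (hA p i).2 hdi
    rw [Finset.mem_filter] at hp
    exact hp.2 ⟨i, heq⟩
  constructor
  · intro hI ρ hρ0 hρ1 f hf
    obtain ⟨r, hr⟩ := hI f hf
    obtain ⟨N, G, hG, hN⟩ := hcompl ρ hρ0 hρ1 f
    have hG0 : G ≠ 0 := fun h0 => hG (h0 ▸ dvd_zero ρ)
    have hGK : toK k G ≠ 0 := Stmt5Aux.toK_ne_zero hG0
    refine ⟨r * G - N, G, hG, ?_⟩
    have hsplit := Finset.sum_filter_add_sum_filter_not Finset.univ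
      (fun p => ∃ i, A p i = ρ)
      (fun p => toK k (aeval (A p) f) / toK k (∏ i, A p i))
    have hsum : ∑ p ∈ Finset.univ.filter (fun p => ∃ i, A p i = ρ),
        toK k (aeval (A p) f) / toK k (∏ i, A p i)
        = toK k r - toK k N / toK k G := by
      rw [← hr, ← hsplit, hN]; ring
    rw [hsum, map_sub, map_mul, sub_div, mul_div_cancel_right₀ _ hGK]
  · intro hII f hf
    set x := ∑ p : V, toK k (aeval (A p) f) / toK k (∏ i, A p i) with hxdef
    have hx : ∀ ρ : Rk k, ρ ≠ 0 → ρ.IsHomogeneous 1 →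
        ∃ h g : Rk k, ¬ ρ ∣ g ∧ x = toK k h / toK k g := by
      intro ρ hρ0 hρ1
      obtain ⟨h₁, g₁, hg₁, hs⟩ := hII ρ hρ0 hρ1 f hf
      obtain ⟨N, G, hG, hN⟩ := hcompl ρ hρ0 hρ1 f
      have hg₁0 : g₁ ≠ 0 := fun h0 => hg₁ (h0 ▸ dvd_zero ρ)
      have hG0 : G ≠ 0 := fun h0 => hG (h0 ▸ dvd_zero ρ)
      refine ⟨h₁ * G + g₁ * N, g₁ * G, ?_, ?_⟩
      · intro hdvd
        rcases (Stmt5Aux.linear_main hρ0 hρ1).1.2.2 _ _ hdvd with h' | h'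
        · exact hg₁ h'
        · exact hG h'
      · have hsplit := Finset.sum_filter_add_sum_filter_not Finset.univ
          (fun p => ∃ i, A p i = ρ)
          (fun p => toK k (aeval (A p) f) / toK k (∏ i, A p i))
        rw [hxdef, ← hsplit, hs, hN,
          div_add_div _ _ (Stmt5Aux.toK_ne_zero hg₁0) (Stmt5Aux.toK_ne_zero hG0),
          map_add, map_mul, map_mul, map_mul]
    set M : Multiset (Rk k) :=
      (Finset.univ.val : Multiset V).bind
        (fun p => (Finset.univ.val : Multiset (Fin n)).map (A p)) with hM
    have hMmem : ∀ ρ ∈ M, ρ ≠ 0 ∧ ρ.IsHomogeneous 1 := by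
      intro ρ hρ
      rw [hM, Multiset.mem_bind] at hρ
      obtain ⟨p, _, hρ⟩ := hρ
      rw [Multiset.mem_map] at hρ
      obtain ⟨i, _, rfl⟩ := hρ
      exact hA p i
    have hMprod : M.prod = ∏ p : V, ∏ i, A p i := by
      rw [hM, Multiset.prod_bind, Finset.prod_eq_multiset_prod]
      congr 1
    obtain ⟨N₀, hN₀⟩ := Stmt5Aux.sum_frac Finset.univ
      (fun p => aeval (A p) f) (fun p => ∏ i, A p i) hb
    exact Stmt5Aux.key x hx M hMmem N₀ (by rw [hxdef, hMprod]; exact hN₀)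

end
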